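/- Let j be a positive integer and s_1, a_1, s_2, a_2 integers. Define h(n, s_1, a_1, s_2, a_2) = C(n - s_1 - C(n - a_1)) + C(n - s_2 - C(n - a_2)) - C(n). If h(n, s_1, a_1, s_2, a_2) = 0 for all n with 0 \le n \le 4j - 1, then h(n, s_1, a_1, s_2, a_2) = 0 for all integers n. -/

import Mathlib

def C (j : ℕ) (n : ℤ) : ℤ := ∑ i ∈ Finset.range j, ⌈((n : ℚ) - i) / (2 * j)⌉

lemma C_shift (j : ℕ) (hj : 0 < j) (n : ℤ) : C j (n + 2 * j) = C j n + j := by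
  unfold C
  have hJ : (0:ℚ) < 2 * j := by positivity
  have key : ∀ i ∈ Finset.range j,
      ⌈(((n + 2 * j : ℤ) : ℚ) - i) / (2 * j)⌉ = ⌈((n : ℚ) - i) / (2 * j)⌉ + 1 := by
    intro i _
    have : (((n + 2 * j : ℤ) : ℚ) - i) / (2 * j) = ((n : ℚ) - i) / (2 * j) + 1 := by
      field_simp
      push_cast
      ring
    rw [this, Int.ceil_add_one]
  rw [Finset.sum_congr rfl key, Finset.sum_add_distrib, Finset.sum_const,
    Finset.card_range]
  simp

lemma C_shift4 (j : ℕ) (hj : 0 < j) (n : ℤ) : C j (n + 4 * j) = C j n + 2 * j := by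
  have h1 := C_shift j hj n
  have h2 := C_shift j hj (n + 2 * j)
  have : n + 2 * j + 2 * j = n + 4 * j := by ring
  rw [this] at h2
  omega

theorem stmt16 (j : ℕ) (hj : 0 < j) (s₁ a₁ s₂ a₂ : ℤ)
    (h : ∀ n : ℤ, 0 ≤ n → n ≤ 4 * j - 1 →
      C j (n - s₁ - C j (n - a₁)) + C j (n - s₂ - C j (n - a₂)) - C j n = 0) :
    ∀ n : ℤ, C j (n - s₁ - C j (n - a₁)) + C j (n - s₂ - C j (n - a₂)) - C j n = 0 := by
  set H : ℤ → ℤ := fun n =>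
    C j (n - s₁ - C j (n - a₁)) + C j (n - s₂ - C j (n - a₂)) - C j n with hH
  have hper : ∀ n : ℤ, H (n + 4 * j) = H n := by
    intro n
    have e1 : n + 4 * j - a₁ = (n - a₁) + 4 * j := by ring
    have e2 : n + 4 * j - a₂ = (n - a₂) + 4 * j := by ring
    simp only [hH, e1, e2, C_shift4 j hj]
    have f1 : n + 4 * j - s₁ - (C j (n - a₁) + 2 * j) = (n - s₁ - C j (n - a₁)) + 2 * j := by
      ring
    have f2 : n + 4 * j - s₂ - (C j (n - a₂) + 2 * j) = (n - s₂ - C j (n - a₂)) + 2 * j := by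
      ring
    rw [f1, f2, C_shift j hj, C_shift j hj]
    ring
  have hperm : ∀ (m : ℤ) (n : ℤ), H (n + 4 * j * m) = H n := by
    intro m
    induction m using Int.induction_on with
    | zero => intro n; simp
    | succ k ih =>
        intro n
        have : n + 4 * j * (k + 1) = (n + 4 * j * k) + 4 * j := by ring
        rw [this, hper, ih]
    | pred k ih =>
        intro n
        have e : n + 4 * j * (-k - 1) + 4 * j = n + 4 * j * (-k) := by ring
        have h2 := hper (n + 4 * j * (-k - 1))
        rw [e, ih n] at h2
        exact h2.symm
  intro n
  have hj' : (0:ℤ) < 4 * j := by positivity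
  have hmod : n % (4 * j) + 4 * j * (n / (4 * j)) = n := Int.emod_add_mul_ediv n (4 * j)
  have h0 : 0 ≤ n % (4 * j) := Int.emod_nonneg n (by omega)
  have h1 : n % (4 * j) < 4 * j := Int.emod_lt_of_pos n hj'
  have := hperm (n / (4 * j)) (n % (4 * j))
  rw [hmod] at this
  have hz := h (n % (4 * j)) h0 (by omega)
  show H n = 0
  rw [this]
  exact hz
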